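/- For l, m ≥ 1, there exists an étale morphism of Feynman graphs W^l → W^m if and only if m divides l; and when m divides l, the set of étale morphisms W^l → W^m has exactly 2m elements. -/

import Mathlib

/-- A Feynman graph: finite sets of edges `E`, half-edges `H`, vertices `V`,
with an injective attachment `s : H → E`, a target map `t : H → V`, and a
fixed-point-free involution `inv : E → E`. -/
structure FG where
  E : Type
  H : Type
  V : Type
  finE : Finite E
  finH : Finite H
  finV : Finite V
  s : H → E
  t : H → V
  inv : E → E
  s_inj : Function.Injective s
  inv_inv : ∀ e, inv (inv e) = e
  inv_ne : ∀ e, inv e ≠ e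

attribute [instance] FG.finE FG.finH FG.finV

/-- A morphism of Feynman graphs. -/
structure FGHom (G G' : FG) where
  fE : G.E → G'.E
  fH : G.H → G'.H
  fV : G.V → G'.V
  comm_inv : ∀ e, fE (G.inv e) = G'.inv (fE e)
  comm_s : ∀ h, fE (G.s h) = G'.s (fH h)
  comm_t : ∀ h, fV (G.t h) = G'.t (fH h)

/-- Composition of morphisms of Feynman graphs. -/
def FGHom.comp {G₁ G₂ G₃ : FG} (g : FGHom G₂ G₃) (f : FGHom G₁ G₂) : FGHom G₁ G₃ where
  fE := g.fE ∘ f.fE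
  fH := g.fH ∘ f.fH
  fV := g.fV ∘ f.fV
  comm_inv := fun e => by simp only [Function.comp_apply, f.comm_inv, g.comm_inv]
  comm_s := fun h => by simp only [Function.comp_apply, f.comm_s, g.comm_s]
  comm_t := fun h => by simp only [Function.comp_apply, f.comm_t, g.comm_t]

/-- A morphism is an isomorphism if all three components are bijections. -/
def FGHom.IsIso {G G' : FG} (f : FGHom G G') : Prop :=
  Function.Bijective f.fE ∧ Function.Bijective f.fH ∧ Function.Bijective f.fV

/-- A morphism is locally injective if it is injective on each fibre `t⁻¹(v)`. -/
def FGHom.LocInj {G G' : FG} (f : FGHom G G') : Prop :=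
  ∀ h₁ h₂ : G.H, G.t h₁ = G.t h₂ → f.fH h₁ = f.fH h₂ → h₁ = h₂

/-- A morphism is étale if it induces a bijection `t⁻¹(v) → t'⁻¹(f_V v)`
for every vertex `v`. -/
def FGHom.Etale {G G' : FG} (f : FGHom G G') : Prop :=
  f.LocInj ∧
  ∀ (v : G.V) (h' : G'.H), G'.t h' = f.fV v → ∃ h : G.H, G.t h = v ∧ f.fH h = h'

/-- A port is an edge not in the image of `s`. -/
def FG.IsPort (G : FG) (e : G.E) : Prop := e ∉ Set.range G.s

/-- An inner edge: both `e` and `inv e` are in the image of `s`. -/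
def FG.IsInner (G : FG) (e : G.E) : Prop :=
  e ∈ Set.range G.s ∧ G.inv e ∈ Set.range G.s

/-- Connectedness: `E ⊔ V` is nonempty and every compatible `Bool`-colouring
of edges and vertices is constant. -/
def FG.Connected (G : FG) : Prop :=
  Nonempty (G.E ⊕ G.V) ∧
  ∀ (cE : G.E → Bool) (cV : G.V → Bool),
    (∀ e, cE (G.inv e) = cE e) →
    (∀ h, cV (G.t h) = cE (G.s h)) →
    ∀ x y : G.E ⊕ G.V, Sum.elim cE cV x = Sum.elim cE cV y

/-- The line graph `L^k` (for `k ≥ 0`): edges `l_0, …, l_{2k+1}` (here the pair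
`{l_{2j}, l_{2j+1}}` is encoded as `(j, false)` and `(j, true)`), `k` vertices,
and `2k` half-edges attaching `l_{2i-1}` and `l_{2i}` to the vertex `v_i`. -/
def lineGraph (k : ℕ) : FG where
  E := Fin (k+1) × Bool
  H := Fin k × Bool
  V := Fin k
  finE := inferInstance
  finH := inferInstance
  finV := inferInstance
  s := fun p => if p.2 then (p.1.castSucc, true) else (p.1.succ, false)
  t := fun p => p.1
  inv := fun p => (p.1, !p.2)
  s_inj := by
    rintro ⟨i, bi⟩ ⟨j, bj⟩ hij
    cases bi <;> cases bj <;> simp_all [Fin.succ_inj, Fin.castSucc_inj]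
  inv_inv := by rintro ⟨i, b⟩; simp
  inv_ne := by
    rintro ⟨i, b⟩ h
    rw [Prod.mk.injEq] at h
    exact (Bool.not_ne_self b) h.2

/-- The wheel graph `W^{m+1}` (this definition, with parameter `m : ℕ`, yields
exactly the wheel graphs `W^m` for `m ≥ 1`): `m+1` vertices in `Fin (m+1)`,
the vertex `i` carrying the two edges `(i, false)` and `(i, true)` (which are
also the half-edges, via `s = id`), and the involution pairing `(i, true)`
with `(i+1, false)` cyclically. -/
def wheelGraph (m : ℕ) : FG where
  E := Fin (m+1) × Bool
  H := Fin (m+1) × Bool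
  V := Fin (m+1)
  finE := inferInstance
  finH := inferInstance
  finV := inferInstance
  s := id
  t := fun p => p.1
  inv := fun p => if p.2 then (p.1 + 1, false) else (p.1 - 1, true)
  s_inj := fun _ _ h => h
  inv_inv := by
    rintro ⟨i, b⟩
    cases b <;> simp
  inv_ne := by
    rintro ⟨i, b⟩ h
    cases b <;> simp_all

section Aux

open scoped Fin.NatCast Fin.CommRing

variable {l m : ℕ}

lemma FGHom.ext' {G G' : FG} {f g : FGHom G G'} (hE : f.fE = g.fE) (hH : f.fH = g.fH)
    (hV : f.fV = g.fV) : f = g := by cases f; cases g; simp_all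

/-- The vertex map of a morphism of wheel graphs, typed in `Fin`. -/
def vmap (f : FGHom (wheelGraph l) (wheelGraph m)) : Fin (l+1) → Fin (m+1) := f.fV

/-- The half-edge map of a morphism of wheel graphs, typed in `Fin × Bool`. -/
def hmap (f : FGHom (wheelGraph l) (wheelGraph m)) : Fin (l+1) × Bool → Fin (m+1) × Bool := f.fH

lemma wheel_fE_eq_fH (f : FGHom (wheelGraph l) (wheelGraph m)) (p : Fin (l+1) × Bool) :
    f.fE p = hmap f p := f.comm_s p

lemma wheel_fst_fH (f : FGHom (wheelGraph l) (wheelGraph m)) (i : Fin (l+1)) (b : Bool) :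
    (hmap f (i, b)).1 = vmap f i := (f.comm_t (i, b)).symm

lemma wheel_inv_true (n : ℕ) (x : Fin (n+1)) :
    (wheelGraph n).inv (x, true) = ((x + 1 : Fin (n+1)), false) := by simp [wheelGraph]

lemma wheel_inv_false (n : ℕ) (x : Fin (n+1)) :
    (wheelGraph n).inv (x, false) = ((x - 1 : Fin (n+1)), true) := by simp [wheelGraph]

lemma wheel_etale_iff (f : FGHom (wheelGraph l) (wheelGraph m)) :
    f.Etale ↔ ∀ i, (hmap f (i, true)).2 = !(hmap f (i, false)).2 := by
  constructor
  · rintro ⟨hinj, _⟩ i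
    have hne : hmap f (i, true) ≠ hmap f (i, false) := by
      intro h
      have h2 : ((i, true) : Fin (l+1) × Bool) = (i, false) := hinj (i, true) (i, false) rfl h
      simpa using congrArg Prod.snd h2
    have h1 := wheel_fst_fH f i true
    have h2 := wheel_fst_fH f i false
    rcases hT : hmap f (i, true) with ⟨x, bx⟩
    rcases hF : hmap f (i, false) with ⟨y, by'⟩
    rw [hT] at h1 hne; rw [hF] at h2 hne
    simp only at h1 h2 ⊢
    subst h1 h2
    cases bx <;> cases by' <;> simp_all
  · intro hb
    constructor
    · rintro ⟨i1, b1⟩ ⟨i2, b2⟩ ht hH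
      have hi : i1 = i2 := ht
      subst hi
      have hs : (hmap f (i1, b1)).2 = (hmap f (i1, b2)).2 := congrArg Prod.snd hH
      have hbi := hb i1
      cases b1 <;> cases b2
      · rfl
      · exact absurd (hs.trans hbi) (by simp)
      · exact absurd (hs.symm.trans hbi) (by simp)
      · rfl
    · intro v h' ht'
      rcases h' with ⟨j, b'⟩
      have hj : j = vmap f v := ht'
      subst hj
      by_cases hc : (hmap f (v, false)).2 = b'
      · refine ⟨(v, false), rfl, ?_⟩
        have h2 := wheel_fst_fH f v false
        show hmap f (v, false) = (vmap f v, b')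
        rcases hF : hmap f (v, false) with ⟨x, bx⟩
        rw [hF] at h2 hc
        simp only at h2 hc
        rw [h2, hc]
      · refine ⟨(v, true), rfl, ?_⟩
        have h1 := wheel_fst_fH f v true
        have h2 := hb v
        show hmap f (v, true) = (vmap f v, b')
        rcases hT : hmap f (v, true) with ⟨x, bx⟩
        rw [hT] at h1 h2
        simp only at h1 h2
        subst h1
        rcases hF : hmap f (v, false) with ⟨y, by'⟩
        rw [hF] at hc h2
        simp only at hc h2
        subst h2
        cases by' <;> cases b' <;> simp_all

lemma wheel_step (f : FGHom (wheelGraph l) (wheelGraph m))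
    (hb : ∀ i, (hmap f (i, true)).2 = !(hmap f (i, false)).2) (i : Fin (l+1)) :
    (hmap f (i + 1, false)).2 = (hmap f (i, false)).2 ∧
      vmap f (i + 1) = (if (hmap f (i, false)).2 then vmap f i - 1 else vmap f i + 1) := by
  have h1 : f.fE ((wheelGraph l).inv (i, true)) = (wheelGraph m).inv (f.fE (i, true)) :=
    f.comm_inv (i, true)
  rw [wheel_inv_true, wheel_fE_eq_fH, wheel_fE_eq_fH] at h1
  have hT : hmap f (i, true) = (vmap f i, !(hmap f (i, false)).2) :=
    Prod.ext (wheel_fst_fH f i true) (hb i)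
  rw [hT] at h1
  have hfst := wheel_fst_fH f (i+1) false
  cases hcase : (hmap f (i, false)).2
  · rw [hcase] at h1
    rw [show ((vmap f i, !false) : Fin (m+1) × Bool) = (vmap f i, true) from rfl,
      wheel_inv_true] at h1
    refine ⟨by rw [h1], ?_⟩
    rw [← wheel_fst_fH f (i+1) false, h1]
    simp
  · rw [hcase] at h1
    rw [show ((vmap f i, !true) : Fin (m+1) × Bool) = (vmap f i, false) from rfl,
      wheel_inv_false] at h1
    refine ⟨by rw [h1], ?_⟩
    rw [← wheel_fst_fH f (i+1) false, h1]
    simp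

lemma wheel_const_o (f : FGHom (wheelGraph l) (wheelGraph m))
    (hb : ∀ i, (hmap f (i, true)).2 = !(hmap f (i, false)).2) (k : ℕ) :
    (hmap f ((k : Fin (l+1)), false)).2 = (hmap f ((0 : Fin (l+1)), false)).2 := by
  induction k with
  | zero => norm_num
  | succ n ih =>
    have hc : ((n + 1 : ℕ) : Fin (l+1)) = (n : Fin (l+1)) + 1 := by push_cast; ring
    rw [hc, (wheel_step f hb _).1, ih]

lemma wheel_fV_cast (f : FGHom (wheelGraph l) (wheelGraph m))
    (hb : ∀ i, (hmap f (i, true)).2 = !(hmap f (i, false)).2) (k : ℕ) :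
    vmap f ((k : Fin (l+1))) =
      (if (hmap f ((0 : Fin (l+1)), false)).2 then vmap f 0 - (k : Fin (m+1))
        else vmap f 0 + (k : Fin (m+1))) := by
  induction k with
  | zero => norm_num
  | succ n ih =>
    have hc : ((n + 1 : ℕ) : Fin (l+1)) = (n : Fin (l+1)) + 1 := by push_cast; ring
    rw [hc, (wheel_step f hb _).2, wheel_const_o f hb n, ih]
    cases hcase : (hmap f ((0 : Fin (l+1)), false)).2 <;> simp <;> ring

lemma wheel_dvd (f : FGHom (wheelGraph l) (wheelGraph m)) (hf : f.Etale) :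
    (m + 1) ∣ (l + 1) := by
  rw [wheel_etale_iff] at hf
  have h := wheel_fV_cast f hf (l + 1)
  have h0 : ((l + 1 : ℕ) : Fin (l + 1)) = 0 := Fin.natCast_self (l+1)
  rw [h0] at h
  have hz : ((l + 1 : ℕ) : Fin (m + 1)) = 0 := by
    cases hcase : (hmap f ((0 : Fin (l+1)), false)).2 <;> rw [hcase] at h <;>
      simp only [if_true, if_false, Bool.false_eq_true, Bool.true_eq_false] at h
    · exact left_eq_add.mp h
    · exact sub_eq_self.mp h.symm
  have hv : (l + 1) % (m + 1) = 0 := by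
    have h1 : ((l + 1 : ℕ) : Fin (m+1)).val = (l + 1) % (m + 1) := Fin.val_natCast _ _
    rw [hz] at h1
    simpa using h1.symm
  exact Nat.dvd_of_mod_eq_zero hv

lemma cast_lsucc (hdvd : (m + 1) ∣ (l + 1)) : ((l + 1 : ℕ) : Fin (m+1)) = 0 := by
  obtain ⟨k, hk⟩ := hdvd
  rw [hk]
  push_cast
  simp

lemma castmod (hdvd : (m + 1) ∣ (l + 1)) (x : ℕ) :
    ((x % (l+1) : ℕ) : Fin (m+1)) = (x : Fin (m+1)) := by
  conv_rhs => rw [← Nat.mod_add_div x (l+1)]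
  obtain ⟨k, hk⟩ := hdvd
  push_cast [hk]
  simp

/-- Reduction map `Fin (l+1) → Fin (m+1)`. -/
def psi (l m : ℕ) (i : Fin (l+1)) : Fin (m+1) := ((i.val : ℕ) : Fin (m+1))

lemma psi_natCast (hdvd : (m + 1) ∣ (l + 1)) (k : ℕ) :
    psi l m (k : Fin (l+1)) = (k : Fin (m+1)) := by
  unfold psi
  rw [Fin.val_natCast, castmod hdvd]

lemma psi_add (hdvd : (m + 1) ∣ (l + 1)) (a b : Fin (l+1)) :
    psi l m (a + b) = psi l m a + psi l m b := by
  unfold psi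
  rw [Fin.val_add, castmod hdvd]
  push_cast; ring

lemma psi_neg (hdvd : (m + 1) ∣ (l + 1)) (a : Fin (l+1)) :
    psi l m (-a) = -psi l m a := by
  unfold psi
  have hv : (-a).val = ((l+1) - a.val) % (l+1) := by rw [Fin.neg_def]
  rw [hv, castmod hdvd, Nat.cast_sub a.isLt.le, cast_lsucc hdvd, zero_sub]

lemma psi_one (hdvd : (m + 1) ∣ (l + 1)) : psi l m 1 = 1 := by
  unfold psi
  rw [Fin.val_one', castmod hdvd, Nat.cast_one]

lemma psi_add_one (hdvd : (m + 1) ∣ (l + 1)) (i : Fin (l+1)) :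
    psi l m (i + 1) = psi l m i + 1 := by
  rw [psi_add hdvd, psi_one hdvd]

lemma psi_sub_one (hdvd : (m + 1) ∣ (l + 1)) (i : Fin (l+1)) :
    psi l m (i - 1) = psi l m i - 1 := by
  rw [sub_eq_add_neg, psi_add hdvd, psi_neg hdvd, psi_one hdvd, sub_eq_add_neg]

lemma psi_zero : psi l m 0 = 0 := by simp [psi]

lemma psi_self (i : Fin (l+1)) : psi l m i = ((i.val : ℕ) : Fin (m+1)) := rfl

end Aux

section Constr

open scoped Fin.NatCast Fin.CommRing

variable {l m : ℕ}

/-- Vertex component of the standard étale morphism with base point `c` and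
orientation `d`. -/
def mkV (l m : ℕ) (c : Fin (m+1)) (d : Bool) (i : Fin (l+1)) : Fin (m+1) :=
  cond d (c - psi l m i) (c + psi l m i)

/-- Half-edge component of the standard étale morphism. -/
def mkH (l m : ℕ) (c : Fin (m+1)) (d : Bool) (p : Fin (l+1) × Bool) : Fin (m+1) × Bool :=
  (mkV l m c d p.1, cond d (!p.2) p.2)

lemma mk_comm_inv (hdvd : (m + 1) ∣ (l + 1)) (c : Fin (m+1)) (d : Bool)
    (e : Fin (l+1) × Bool) :
    mkH l m c d ((wheelGraph l).inv e) = (wheelGraph m).inv (mkH l m c d e) := by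
  obtain ⟨i, b⟩ := e
  cases b
  · rw [wheel_inv_false]
    cases d
    · show (mkV l m c false (i-1), true) = (wheelGraph m).inv (mkV l m c false i, false)
      rw [wheel_inv_false]
      refine Prod.ext ?_ rfl
      show c + psi l m (i-1) = c + psi l m i - 1
      rw [psi_sub_one hdvd]; ring
    · show (mkV l m c true (i-1), false) = (wheelGraph m).inv (mkV l m c true i, true)
      rw [wheel_inv_true]
      refine Prod.ext ?_ rfl
      show c - psi l m (i-1) = c - psi l m i + 1
      rw [psi_sub_one hdvd]; ring
  · rw [wheel_inv_true]
    cases d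
    · show (mkV l m c false (i+1), false) = (wheelGraph m).inv (mkV l m c false i, true)
      rw [wheel_inv_true]
      refine Prod.ext ?_ rfl
      show c + psi l m (i+1) = c + psi l m i + 1
      rw [psi_add_one hdvd]; ring
    · show (mkV l m c true (i+1), true) = (wheelGraph m).inv (mkV l m c true i, false)
      rw [wheel_inv_false]
      refine Prod.ext ?_ rfl
      show c - psi l m (i+1) = c - psi l m i - 1
      rw [psi_add_one hdvd]; ring

/-- The standard étale morphism of wheel graphs. -/
def mkHom (hdvd : (m + 1) ∣ (l + 1)) (c : Fin (m+1)) (d : Bool) :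
    FGHom (wheelGraph l) (wheelGraph m) where
  fE := mkH l m c d
  fH := mkH l m c d
  fV := mkV l m c d
  comm_inv := mk_comm_inv hdvd c d
  comm_s := fun _ => rfl
  comm_t := fun _ => rfl

lemma mkHom_etale (hdvd : (m + 1) ∣ (l + 1)) (c : Fin (m+1)) (d : Bool) :
    (mkHom hdvd c d).Etale := by
  rw [wheel_etale_iff]
  intro i
  show (mkH l m c d (i, true)).2 = !(mkH l m c d (i, false)).2
  cases d <;> rfl

lemma eq_mkHom (hdvd : (m + 1) ∣ (l + 1)) (f : FGHom (wheelGraph l) (wheelGraph m))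
    (hf : f.Etale) :
    f = mkHom hdvd (vmap f 0) ((hmap f ((0 : Fin (l+1)), false)).2) := by
  rw [wheel_etale_iff] at hf
  have hV : ∀ i : Fin (l+1),
      vmap f i = mkV l m (vmap f 0) ((hmap f ((0 : Fin (l+1)), false)).2) i := by
    intro i
    have h1 := wheel_fV_cast f hf i.val
    rw [Fin.cast_val_eq_self] at h1
    rw [h1]
    cases hd : (hmap f ((0 : Fin (l+1)), false)).2 <;> simp [mkV, psi, hd]
  have hO : ∀ i : Fin (l+1),
      (hmap f (i, false)).2 = (hmap f ((0 : Fin (l+1)), false)).2 := by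
    intro i
    have := wheel_const_o f hf i.val
    rwa [Fin.cast_val_eq_self] at this
  have hH : ∀ p, hmap f p =
      mkH l m (vmap f 0) ((hmap f ((0 : Fin (l+1)), false)).2) p := by
    rintro ⟨i, b⟩
    refine Prod.ext ?_ ?_
    · rw [wheel_fst_fH f i b]
      exact hV i
    · cases b
      · show (hmap f (i, false)).2 = _
        rw [hO i]
        cases hd : (hmap f ((0 : Fin (l+1)), false)).2 <;> rfl
      · show (hmap f (i, true)).2 = _
        rw [hf i, hO i]
        cases hd : (hmap f ((0 : Fin (l+1)), false)).2 <;> rfl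
  apply FGHom.ext'
  · funext p
    rw [show f.fE p = hmap f p from wheel_fE_eq_fH f p]
    exact hH p
  · funext p
    exact hH p
  · funext i
    exact hV i

/-- Étale morphisms between wheel graphs are classified by the image of the
vertex `0` and an orientation bit. -/
def etaleEquiv (hdvd : (m + 1) ∣ (l + 1)) :
    {f : FGHom (wheelGraph l) (wheelGraph m) // f.Etale} ≃ (Fin (m+1) × Bool) where
  toFun f := (vmap f.1 0, (hmap f.1 ((0 : Fin (l+1)), false)).2)
  invFun p := ⟨mkHom hdvd p.1 p.2, mkHom_etale hdvd p.1 p.2⟩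
  left_inv f := Subtype.ext (eq_mkHom hdvd f.1 f.2).symm
  right_inv p := by
    obtain ⟨c, d⟩ := p
    refine Prod.ext ?_ ?_
    · show mkV l m c d 0 = c
      have : psi l m (0 : Fin (l+1)) = 0 := psi_zero
      cases d <;> simp [mkV, this]
    · show (mkH l m c d ((0 : Fin (l+1)), false)).2 = d
      cases d <;> rfl

end Constr

/-- For `l, m ≥ 1` there is an étale morphism `W^l → W^m` if and only if `m`
divides `l`, in which case there are exactly `2m` such; here `wheelGraph n`
is the wheel graph `W^{n+1}`, so the statement is expressed with `l+1`, `m+1`. -/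
theorem etale_wheel_to_wheel (l m : ℕ) :
    (Nonempty {f : FGHom (wheelGraph l) (wheelGraph m) // f.Etale} ↔
      (m + 1) ∣ (l + 1)) ∧
    ((m + 1) ∣ (l + 1) →
      Nat.card {f : FGHom (wheelGraph l) (wheelGraph m) // f.Etale} =
        2 * (m + 1)) := by


  constructor
  · constructor
    · rintro ⟨⟨f, hf⟩⟩
      exact wheel_dvd f hf
    · intro hdvd
      exact ⟨⟨mkHom hdvd 0 false, mkHom_etale hdvd 0 false⟩⟩
  · intro hdvd
    rw [Nat.card_congr (etaleEquiv hdvd)]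
    simp [Nat.card_eq_fintype_card]
    ring
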